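/- arXiv:1803.05866 — 2 statements merged into one kernel-verified Lean document; each statement's English description precedes it below -/
import Mathlib

section
/- For any three rooted tree shapes T1, T2, T3 with the same number of leaves, |V(T2)| + μ(T1, T3) ≥ μ(T1, T2) + μ(T2, T3), where μ denotes the maximum cardinality of a consistent cluster matching between two tree shapes. -/
/-- A rooted tree shape on a finite vertex type, given by a parent function.
The root is its own parent, and every vertex reaches the root by iterating
the parent function (this forbids cycles away from the root). -/
structure RTree where
  V : Type
  [fin : Fintype V]
  [deq : DecidableEq V]
  root : V
  parent : V → V
  parent_root : parent root = root
  reaches_root : ∀ v : V, ∃ n : ℕ, parent^[n] v = root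

attribute [instance] RTree.fin RTree.deq

namespace RTree

/-- `u` is a descendant of `v` (every vertex is a descendant of itself). -/
def Desc (T : RTree) (u v : T.V) : Prop := ∃ n : ℕ, T.parent^[n] u = v

/-- A leaf is a vertex with no children. -/
def IsLeaf (T : RTree) (v : T.V) : Prop := ∀ u : T.V, u ≠ v → T.parent u ≠ v

def leafSet (T : RTree) : Set T.V := {v | T.IsLeaf v}

/-- The size (number of leaves) of the tree. -/
noncomputable def nLeaves (T : RTree) : ℕ := T.leafSet.ncard

/-- The size of a vertex: the number of leaves of the subtree rooted at it. -/
noncomputable def sz (T : RTree) (v : T.V) : ℕ := {l | T.IsLeaf l ∧ T.Desc l v}.ncard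

/-- Two vertices are incomparable if neither is an ancestor of the other. -/
def Incomp (T : RTree) (u v : T.V) : Prop := ¬ T.Desc u v ∧ ¬ T.Desc v u

def children (T : RTree) (v : T.V) : Set T.V := {u | T.parent u = v ∧ u ≠ v}

/-- The number of vertices of the tree. -/
noncomputable def nVerts (T : RTree) : ℕ := Nat.card T.V

/-- A binary tree shape: every internal vertex has exactly two children. -/
def IsBinary (T : RTree) : Prop := ∀ v : T.V, ¬ T.IsLeaf v → (T.children v).ncard = 2

end RTree

/-- A consistent cluster matching between two tree shapes: a set of pairs of
vertices in which each vertex occurs at most once, matched vertices root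
subtrees with equally many leaves (M1), and incomparability is preserved in
both directions (M2). -/
def ConsistentMatching (T1 T2 : RTree) (M : Set (T1.V × T2.V)) : Prop :=
  (∀ p ∈ M, ∀ q ∈ M, (p.1 = q.1 ∨ p.2 = q.2) → p = q) ∧
  (∀ p ∈ M, T1.sz p.1 = T2.sz p.2) ∧
  (∀ p ∈ M, ∀ q ∈ M, (T1.Incomp p.1 q.1 ↔ T2.Incomp p.2 q.2))

/-- The maximum cardinality of a consistent cluster matching. -/
noncomputable def mu (T1 T2 : RTree) : ℕ :=
  sSup {n | ∃ M : Set (T1.V × T2.V), ConsistentMatching T1 T2 M ∧ M.ncard = n}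

lemma cm_empty (T1 T2 : RTree) : ConsistentMatching T1 T2 ∅ := by
  refine ⟨?_, ?_, ?_⟩ <;> intro p hp <;> simp at hp

lemma mu_bdd (T1 T2 : RTree) :
    BddAbove {n | ∃ M : Set (T1.V × T2.V), ConsistentMatching T1 T2 M ∧ M.ncard = n} := by
  refine ⟨Nat.card (T1.V × T2.V), ?_⟩
  rintro n ⟨M, _, rfl⟩
  simpa [Set.ncard_univ] using Set.ncard_le_ncard (Set.subset_univ M) Set.finite_univ

lemma mu_spec (T1 T2 : RTree) :
    ∃ M : Set (T1.V × T2.V), ConsistentMatching T1 T2 M ∧ M.ncard = mu T1 T2 :=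
by
  have h0 : 0 ∈ {n | ∃ M : Set (T1.V × T2.V), ConsistentMatching T1 T2 M ∧ M.ncard = n} :=
    ⟨∅, cm_empty T1 T2, by simp⟩
  exact Nat.sSup_mem ⟨0, h0⟩ (mu_bdd T1 T2)

lemma le_mu {T1 T2 : RTree} {M : Set (T1.V × T2.V)} (h : ConsistentMatching T1 T2 M) :
    M.ncard ≤ mu T1 T2 :=
  le_csSup (mu_bdd T1 T2) ⟨M, h, rfl⟩

/-- For three tree shapes with the same number of leaves,
`|V(T2)| + μ(T1,T3) ≥ μ(T1,T2) + μ(T2,T3)`. -/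
theorem mu_triangle (T1 T2 T3 : RTree)
    (h12 : T1.nLeaves = T2.nLeaves) (h23 : T2.nLeaves = T3.nLeaves) :
    mu T1 T2 + mu T2 T3 ≤ T2.nVerts + mu T1 T3 := by
  classical
  obtain ⟨M12, hM12, hc12⟩ := mu_spec T1 T2
  obtain ⟨M23, hM23, hc23⟩ := mu_spec T2 T3
  obtain ⟨u12, s12, i12⟩ := hM12
  obtain ⟨u23, s23, i23⟩ := hM23
  set B12 : Set T2.V := Prod.snd '' M12 with hB12def
  set B23 : Set T2.V := Prod.fst '' M23 with hB23def
  set A : Set T2.V := B12 ∩ B23 with hAdef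
  have hAmem : ∀ b ∈ A, (∃ a, (a, b) ∈ M12) ∧ (∃ c, (b, c) ∈ M23) := by
    rintro b ⟨⟨p, hp, rfl⟩, ⟨q, hq, hq2⟩⟩
    refine ⟨⟨p.1, by simpa using hp⟩, ⟨q.2, ?_⟩⟩
    rw [← hq2]; simpa using hq
  set f1 : T2.V → T1.V := fun b => if h : ∃ a, (a, b) ∈ M12 then h.choose else T1.root
    with hf1def
  set f2 : T2.V → T3.V := fun b => if h : ∃ c, (b, c) ∈ M23 then h.choose else T3.root
    with hf2def
  have hf1 : ∀ b ∈ A, (f1 b, b) ∈ M12 := by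
    intro b hb
    have h := (hAmem b hb).1
    simp only [hf1def, dif_pos h]
    exact h.choose_spec
  have hf2 : ∀ b ∈ A, (b, f2 b) ∈ M23 := by
    intro b hb
    have h := (hAmem b hb).2
    simp only [hf2def, dif_pos h]
    exact h.choose_spec
  set M13 : Set (T1.V × T3.V) := {p | ∃ b, (p.1, b) ∈ M12 ∧ (b, p.2) ∈ M23} with hM13def
  have cm13 : ConsistentMatching T1 T3 M13 := by
    refine ⟨?_, ?_, ?_⟩
    · rintro p ⟨b, hpb, hbp⟩ q ⟨b', hqb, hbq⟩ hpq
      rcases hpq with h1 | h2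
      · have hb : b = b' :=
          congrArg Prod.snd (u12 (p.1, b) hpb (q.1, b') hqb (Or.inl h1))
        subst hb
        have h' := u23 (b, p.2) hbp (b, q.2) hbq (Or.inl rfl)
        have h2 : p.2 = q.2 := by injection h'
        exact Prod.ext_iff.mpr ⟨h1, h2⟩
      · have hb : b = b' :=
          congrArg Prod.fst (u23 (b, p.2) hbp (b', q.2) hbq (Or.inr h2))
        subst hb
        have h' := u12 (p.1, b) hpb (q.1, b) hqb (Or.inr rfl)
        have h1 : p.1 = q.1 := by injection h'
        exact Prod.ext_iff.mpr ⟨h1, h2⟩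
    · rintro p ⟨b, hpb, hbp⟩
      exact (s12 (p.1, b) hpb).trans (s23 (b, p.2) hbp)
    · rintro p ⟨b, hpb, hbp⟩ q ⟨b', hqb, hbq⟩
      exact (i12 (p.1, b) hpb (q.1, b') hqb).trans (i23 (b, p.2) hbp (b', q.2) hbq)
  have hinj : Set.InjOn (fun b => (f1 b, f2 b)) A := by
    intro b hb b' hb' h
    have h1 : f1 b = f1 b' := congrArg Prod.fst h
    exact congrArg Prod.snd (u12 (f1 b, b) (hf1 b hb) (f1 b', b') (hf1 b' hb') (Or.inl h1))
  have hmap : ∀ b ∈ A, (f1 b, f2 b) ∈ M13 := fun b hb => ⟨b, hf1 b hb, hf2 b hb⟩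
  have hcardA : A.ncard ≤ M13.ncard :=
    Set.ncard_le_ncard_of_injOn _ hmap hinj (Set.toFinite M13)
  have hB12 : B12.ncard = M12.ncard := by
    rw [hB12def]
    exact Set.ncard_image_of_injOn fun p hp q hq h => u12 p hp q hq (Or.inr h)
  have hB23 : B23.ncard = M23.ncard := by
    rw [hB23def]
    exact Set.ncard_image_of_injOn fun p hp q hq h => u23 p hp q hq (Or.inl h)
  have huni : (B12 ∪ B23).ncard + A.ncard = B12.ncard + B23.ncard :=
    Set.ncard_union_add_ncard_inter B12 B23 (Set.toFinite _) (Set.toFinite _)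
  have hsub : (B12 ∪ B23).ncard ≤ T2.nVerts := by
    rw [RTree.nVerts, ← Set.ncard_univ]
    exact Set.ncard_le_ncard (Set.subset_univ _) Set.finite_univ
  have h13 : M13.ncard ≤ mu T1 T3 := le_mu cm13
  omega
end

section
/- Let T1 and T2 be rooted tree shapes with the same number of leaves, and let u be an internal child of the root of T1. Let T1 − u be the tree obtained by contracting the edge from the root to u (deleting u and attaching its children to the root). Then d*_RF(T1, T2) ≤ d*_RF(T1 − u, T2) + 1. -/
/-- The set of clusters of a tree under a leaf labelling `φ`. -/
def clusterSet (T : RTree) {X : Type} (φ : T.V → X) : Set (Set X) :=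
  {C | ∃ u : T.V, C = φ '' {l | T.IsLeaf l ∧ T.Desc l u}}

/-- The Robinson–Foulds distance of two labelled trees: the cardinality of the
symmetric difference of their cluster sets. -/
noncomputable def dRF (T1 T2 : RTree) {X : Type} (φ1 : T1.V → X) (φ2 : T2.V → X) : ℕ :=
  ((clusterSet T1 φ1 \ clusterSet T2 φ2) ∪ (clusterSet T2 φ2 \ clusterSet T1 φ1)).ncard

/-- The extension of the Robinson–Foulds distance to tree shapes: the minimum
over all pairs of bijective leaf labellings by a common label set. -/
noncomputable def dRFstar (T1 T2 : RTree) : ℕ :=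
  sInf {d | ∃ φ1 : T1.V → Fin T1.nLeaves, ∃ φ2 : T2.V → Fin T1.nLeaves,
    Set.BijOn φ1 T1.leafSet Set.univ ∧ Set.BijOn φ2 T2.leafSet Set.univ ∧
    d = dRF T1 T2 φ1 φ2}

/-- Contracting the edge from the root to its child `u`: delete `u` and
attach its children directly to the root. -/
def RTree.contract (T : RTree) (u : T.V) (hu : u ≠ T.root) : RTree where
  V := {v : T.V // v ≠ u}
  fin := inferInstance
  deq := inferInstance
  root := ⟨T.root, fun h => hu h.symm⟩
  parent := fun v =>
    if h : T.parent v.val = u then ⟨T.root, fun h' => hu h'.symm⟩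
    else ⟨T.parent v.val, h⟩
  parent_root := by
    have h : T.parent T.root ≠ u := by
      rw [T.parent_root]; exact fun h => hu h.symm
    simp [h, T.parent_root]
  reaches_root := by
    intro v
    obtain ⟨n, hn⟩ := T.reaches_root v.val
    induction n generalizing v with
    | zero => exact ⟨0, Subtype.ext hn⟩
    | succ m ih =>
        by_cases hpu : T.parent v.val = u
        · exact ⟨1, by simp [hpu]⟩
        · have hn' : T.parent^[m] (T.parent v.val) = T.root := by
            rw [← Function.iterate_succ_apply]; exact hn
          obtain ⟨m', hm'⟩ := ih ⟨T.parent v.val, hpu⟩ hn'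
          refine ⟨m' + 1, ?_⟩
          rw [Function.iterate_succ_apply]
          simpa [hpu] using hm'


section Auxiliary

open Set

lemma RTree.desc_trans (T : RTree) {a b c : T.V} (h1 : T.Desc a b) (h2 : T.Desc b c) :
    T.Desc a c := by
  obtain ⟨m, hm⟩ := h1; obtain ⟨n, hn⟩ := h2
  exact ⟨n + m, by rw [Function.iterate_add_apply, hm, hn]⟩

lemma RTree.iterate_root (T : RTree) (n : ℕ) : T.parent^[n] T.root = T.root :=
  Function.iterate_fixed T.parent_root n

lemma RTree.exists_leaf (T : RTree) : ∃ v, T.IsLeaf v := by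
  have hne : Nonempty T.V := ⟨T.root⟩
  classical
  let d : T.V → ℕ := fun v => Nat.find (T.reaches_root v)
  obtain ⟨v, hv⟩ := Finite.exists_max d
  refine ⟨v, fun w hwv hpw => ?_⟩
  have hdw : T.parent^[d w] w = T.root := Nat.find_spec (T.reaches_root w)
  rcases Nat.eq_zero_or_pos (d w) with h0 | hpos
  · rw [h0] at hdw
    simp only [Function.iterate_zero, id_eq] at hdw
    subst hdw
    rw [T.parent_root] at hpw
    exact hwv (hpw ▸ rfl)
  · obtain ⟨k, hk⟩ := Nat.exists_eq_add_of_lt hpos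
    rw [hk, Nat.zero_add] at hdw
    rw [Function.iterate_succ_apply, hpw] at hdw
    have hdvk : d v ≤ k := Nat.find_le hdw
    have := hv w
    omega

section Contract

variable {T : RTree} {u : T.V} (hne : u ≠ T.root)

lemma contract_parent_val (v : (T.contract u hne).V) :
    ((T.contract u hne).parent v).val =
      if T.parent v.val = u then T.root else T.parent v.val := by
  by_cases h : T.parent v.val = u <;> simp [RTree.contract, h]

lemma contract_desc_of (hpu : T.parent u = T.root) :
    ∀ (n : ℕ) (v w : (T.contract u hne).V),
    (T.contract u hne).parent^[n] v = w → T.Desc v.val w.val := by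
  intro n
  induction n with
  | zero => intro v w hn; exact ⟨0, congrArg Subtype.val hn⟩
  | succ m ih =>
    intro v w hn
    rw [Function.iterate_succ_apply] at hn
    have h1 := ih _ _ hn
    refine T.desc_trans ?_ h1
    by_cases h : T.parent v.val = u
    · refine ⟨2, ?_⟩
      show T.parent (T.parent v.val) = _
      rw [h, hpu, contract_parent_val, if_pos h]
    · exact ⟨1, by rw [contract_parent_val, if_neg h, Function.iterate_one]⟩

lemma contract_desc_to (hpu : T.parent u = T.root) :
    ∀ (n : ℕ) (v w : (T.contract u hne).V),
    T.parent^[n] v.val = w.val → (T.contract u hne).Desc v w := by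
  intro n
  induction n with
  | zero => intro v w hn; exact ⟨0, Subtype.ext hn⟩
  | succ m ih =>
    intro v w hn
    rw [Function.iterate_succ_apply] at hn
    by_cases h : T.parent v.val = u
    · rw [h] at hn
      match m, hn with
      | 0, hn => exact absurd hn.symm w.prop
      | Nat.succ k, hn =>
        rw [Function.iterate_succ_apply, hpu, T.iterate_root] at hn
        refine ⟨1, Subtype.ext ?_⟩
        show ((T.contract u hne).parent v).val = w.val
        rw [contract_parent_val, if_pos h, hn]
    · have hval : ((T.contract u hne).parent v).val = T.parent v.val := by
        rw [contract_parent_val, if_neg h]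
      obtain ⟨k, hk⟩ := ih ((T.contract u hne).parent v) w (by rw [hval]; exact hn)
      exact ⟨k + 1, by rw [Function.iterate_succ_apply]; exact hk⟩

lemma contract_desc_iff (hpu : T.parent u = T.root) (v w : (T.contract u hne).V) :
    (T.contract u hne).Desc v w ↔ T.Desc v.val w.val := by
  constructor
  · rintro ⟨n, hn⟩; exact contract_desc_of hne hpu n v w hn
  · rintro ⟨n, hn⟩; exact contract_desc_to hne hpu n v w hn

lemma contract_isLeaf_iff (hpu : T.parent u = T.root) (hint : ¬ T.IsLeaf u)
    (v : (T.contract u hne).V) :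
    (T.contract u hne).IsLeaf v ↔ T.IsLeaf v.val := by
  constructor
  · intro hl w hwv hpw
    by_cases hwu : w = u
    · subst hwu
      have hvr : v.val = T.root := by rw [← hpw, hpu]
      simp only [RTree.IsLeaf, not_forall] at hint
      push_neg at hint
      obtain ⟨c, hcu, hpc⟩ := hint
      have hcr : c ≠ T.root := fun hh => by
        rw [hh, T.parent_root] at hpc; exact hne hpc.symm
      refine hl ⟨c, hcu⟩ (fun hh => hcr ((congrArg Subtype.val hh).trans hvr)) ?_
      refine Subtype.ext ?_
      exact (contract_parent_val hne _).trans ((if_pos hpc).trans hvr.symm)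
    · have hwvne : T.parent w ≠ u := by rw [hpw]; exact v.prop
      refine hl ⟨w, hwu⟩ (fun hh => hwv (congrArg Subtype.val hh)) ?_
      refine Subtype.ext ?_
      exact (contract_parent_val hne _).trans ((if_neg hwvne).trans hpw)
  · intro hl w hwv hpw
    have hval : ((T.contract u hne).parent w).val = v.val := congrArg Subtype.val hpw
    rw [contract_parent_val] at hval
    by_cases h : T.parent w.val = u
    · rw [if_pos h] at hval
      exact hl u (fun hh => hne (hh.trans hval.symm)) (hpu.trans hval)
    · rw [if_neg h] at hval
      exact hl w.val (fun hh => hwv (Subtype.ext hh)) hval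

lemma contract_leafSet (hpu : T.parent u = T.root) (hint : ¬ T.IsLeaf u) :
    T.leafSet = Subtype.val '' (T.contract u hne).leafSet := by
  ext l
  constructor
  · intro hl
    have hlu : l ≠ u := fun h => hint (h ▸ hl)
    exact ⟨⟨l, hlu⟩, (contract_isLeaf_iff hne hpu hint _).2 hl, rfl⟩
  · rintro ⟨l', hl', rfl⟩
    exact (contract_isLeaf_iff hne hpu hint _).1 hl'

lemma contract_nLeaves (hpu : T.parent u = T.root) (hint : ¬ T.IsLeaf u) :
    (T.contract u hne).nLeaves = T.nLeaves := by
  unfold RTree.nLeaves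
  rw [contract_leafSet hne hpu hint]
  exact (Set.ncard_image_of_injective _ Subtype.val_injective).symm

lemma cluster_image (hpu : T.parent u = T.root) (hint : ¬ T.IsLeaf u)
    {X : Type} (φ : (T.contract u hne).V → X) (φ1 : T.V → X)
    (hcomp : ∀ (w : T.V) (h : w ≠ u), φ1 w = φ ⟨w, h⟩) (v : (T.contract u hne).V) :
    φ1 '' {l | T.IsLeaf l ∧ T.Desc l v.val} =
      φ '' {l | (T.contract u hne).IsLeaf l ∧ (T.contract u hne).Desc l v} := by
  ext x
  constructor
  · rintro ⟨l, ⟨hl, hd⟩, rfl⟩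
    have hlu : l ≠ u := fun h => hint (h ▸ hl)
    exact ⟨⟨l, hlu⟩, ⟨(contract_isLeaf_iff hne hpu hint _).2 hl,
      (contract_desc_iff hne hpu _ _).2 hd⟩, (hcomp l hlu).symm⟩
  · rintro ⟨l, ⟨hl, hd⟩, rfl⟩
    exact ⟨l.val, ⟨(contract_isLeaf_iff hne hpu hint _).1 hl,
      (contract_desc_iff hne hpu _ _).1 hd⟩, hcomp l.val l.prop⟩

end Contract

lemma clusterSet_finite (T : RTree) {X : Type} (φ : T.V → X) : (clusterSet T φ).Finite := by
  have h : clusterSet T φ = Set.range (fun v : T.V => φ '' {l | T.IsLeaf l ∧ T.Desc l v}) := by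
    ext S; simp [clusterSet, Set.range, eq_comm]
  rw [h]; exact Set.finite_range _

lemma clusterSet_comp_equiv (T : RTree) {X Y : Type} (e : X ≃ Y) (φ : T.V → X) :
    clusterSet T (fun v => e (φ v)) = (Set.image e) '' clusterSet T φ := by
  ext S
  simp only [clusterSet, Set.mem_setOf_eq, Set.mem_image]
  constructor
  · rintro ⟨v, rfl⟩
    exact ⟨_, ⟨v, rfl⟩, (Set.image_comp e φ _).symm⟩
  · rintro ⟨C, ⟨v, rfl⟩, rfl⟩
    exact ⟨v, (Set.image_comp e φ _).symm⟩

lemma dRF_comp_equiv (T1 T2 : RTree) {X Y : Type} (e : X ≃ Y)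
    (φ1 : T1.V → X) (φ2 : T2.V → X) :
    dRF T1 T2 (fun v => e (φ1 v)) (fun v => e (φ2 v)) = dRF T1 T2 φ1 φ2 := by
  unfold dRF
  have hinj : Function.Injective (Set.image e) := Set.image_injective.2 e.injective
  rw [clusterSet_comp_equiv, clusterSet_comp_equiv, ← Set.image_diff hinj,
    ← Set.image_diff hinj, ← Set.image_union, Set.ncard_image_of_injective _ hinj]

lemma exists_labelling (T : RTree) (n : ℕ) (h : T.nLeaves = n) :
    ∃ φ : T.V → Fin n, Set.BijOn φ T.leafSet Set.univ := by
  classical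
  haveI : Fintype T.leafSet := (Set.toFinite _).fintype
  have hcard : Fintype.card T.leafSet = n := by
    rw [← Set.toFinset_card, ← Set.ncard_eq_toFinset_card']; exact h
  let e : T.leafSet ≃ Fin n := Fintype.equivFinOfCardEq hcard
  obtain ⟨l0, hl0⟩ := T.exists_leaf
  refine ⟨fun v => if h : v ∈ T.leafSet then e ⟨v, h⟩ else e ⟨l0, hl0⟩,
    fun _ _ => Set.mem_univ _, ?_, ?_⟩
  · intro a ha b hb hab
    simp only [dif_pos ha, dif_pos hb] at hab
    exact Subtype.ext_iff.1 (e.injective hab)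
  · intro x _
    refine ⟨(e.symm x).val, (e.symm x).prop, ?_⟩
    simp only [dif_pos (e.symm x).prop]
    exact e.apply_symm_apply x

lemma symmdiff_bound {X : Type} {A A' B : Set X} (S : X) (hA' : A'.Finite) (hB : B.Finite)
    (h1 : A' ⊆ A) (h2 : A ⊆ A' ∪ {S}) :
    ((A \ B) ∪ (B \ A)).ncard ≤ ((A' \ B) ∪ (B \ A')).ncard + 1 := by
  have hsub : (A \ B) ∪ (B \ A) ⊆ ((A' \ B) ∪ (B \ A')) ∪ {S} := by
    rintro x (⟨hxA, hxB⟩ | ⟨hxB, hxA⟩)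
    · rcases h2 hxA with h | h
      · exact Or.inl (Or.inl ⟨h, hxB⟩)
      · exact Or.inr h
    · exact Or.inl (Or.inr ⟨hxB, fun hx => hxA (h1 hx)⟩)
  have hfin : ((((A' \ B) ∪ (B \ A')) : Set X) ∪ {S}).Finite :=
    (((hA'.diff).union (hB.diff)).union (Set.finite_singleton S))
  calc ((A \ B) ∪ (B \ A)).ncard ≤ (((A' \ B) ∪ (B \ A')) ∪ {S}).ncard :=
        Set.ncard_le_ncard hsub hfin
    _ ≤ ((A' \ B) ∪ (B \ A')).ncard + ({S} : Set X).ncard := Set.ncard_union_le _ _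
    _ = ((A' \ B) ∪ (B \ A')).ncard + 1 := by rw [Set.ncard_singleton]

end Auxiliary

/-- If `u` is an internal child of the root of `T1`, then
`d*_RF(T1, T2) ≤ d*_RF(T1 - u, T2) + 1`. -/
theorem dRFstar_contract_le (T1 T2 : RTree) (hn : T1.nLeaves = T2.nLeaves)
    (u : T1.V) (hchild : u ∈ T1.children T1.root) (hne : u ≠ T1.root)
    (hinternal : ¬ T1.IsLeaf u) :
    dRFstar T1 T2 ≤ dRFstar (T1.contract u hne) T2 + 1 := by
  classical
  have hpu : T1.parent u = T1.root := hchild.1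
  have hCn : (T1.contract u hne).nLeaves = T1.nLeaves := contract_nLeaves hne hpu hinternal
  have hT2n : T2.nLeaves = (T1.contract u hne).nLeaves := by rw [hCn, hn]
  obtain ⟨ψ1, hψ1⟩ := exists_labelling (T1.contract u hne) _ rfl
  obtain ⟨ψ2, hψ2⟩ := exists_labelling T2 _ hT2n
  have hSne : {d | ∃ φ1' : (T1.contract u hne).V → Fin (T1.contract u hne).nLeaves,
      ∃ φ2' : T2.V → Fin (T1.contract u hne).nLeaves,
      Set.BijOn φ1' (T1.contract u hne).leafSet Set.univ ∧
      Set.BijOn φ2' T2.leafSet Set.univ ∧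
      d = dRF (T1.contract u hne) T2 φ1' φ2'}.Nonempty :=
    ⟨_, ψ1, ψ2, hψ1, hψ2, rfl⟩
  have hmem := Nat.sInf_mem hSne
  obtain ⟨φ, φ2, hφ, hφ2, hd⟩ := hmem
  have hd' : dRFstar (T1.contract u hne) T2 = dRF (T1.contract u hne) T2 φ φ2 := hd
  let e : Fin (T1.contract u hne).nLeaves ≃ Fin T1.nLeaves := finCongr hCn
  let φ1 : T1.V → Fin T1.nLeaves := fun v =>
    if h : v = u then e (φ (T1.contract u hne).root) else e (φ ⟨v, h⟩)
  have hcomp : ∀ (w : T1.V) (h : w ≠ u), φ1 w = e (φ ⟨w, h⟩) := fun w h => dif_neg h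
  let φ2' : T2.V → Fin T1.nLeaves := fun v => e (φ2 v)
  have hb1 : Set.BijOn φ1 T1.leafSet Set.univ := by
    refine ⟨fun _ _ => Set.mem_univ _, ?_, ?_⟩
    · intro a ha b hb hab
      have hau : a ≠ u := fun h => hinternal (h ▸ ha)
      have hbu : b ≠ u := fun h => hinternal (h ▸ hb)
      rw [hcomp a hau, hcomp b hbu] at hab
      have hmem1 : (⟨a, hau⟩ : (T1.contract u hne).V) ∈ (T1.contract u hne).leafSet :=
        (contract_isLeaf_iff hne hpu hinternal _).2 ha
      have hmem2 : (⟨b, hbu⟩ : (T1.contract u hne).V) ∈ (T1.contract u hne).leafSet :=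
        (contract_isLeaf_iff hne hpu hinternal _).2 hb
      exact congrArg Subtype.val (hφ.2.1 hmem1 hmem2 (e.injective hab))
    · intro x _
      obtain ⟨l, hl, hlx⟩ := hφ.2.2 (Set.mem_univ (e.symm x))
      refine ⟨l.val, (contract_isLeaf_iff hne hpu hinternal _).1 hl, ?_⟩
      rw [hcomp l.val l.prop]
      have : φ (⟨l.val, l.prop⟩ : (T1.contract u hne).V) = e.symm x := hlx
      rw [this]
      exact e.apply_symm_apply x
  have hb2 : Set.BijOn φ2' T2.leafSet Set.univ := by
    have he : Set.BijOn e Set.univ Set.univ := by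
      exact e.bijective.bijOn_univ
    exact he.comp hφ2
  have key : dRF T1 T2 φ1 φ2' ≤
      dRF (T1.contract u hne) T2 (fun v => e (φ v)) φ2' + 1 := by
    unfold dRF
    refine symmdiff_bound (φ1 '' {l | T1.IsLeaf l ∧ T1.Desc l u})
      (clusterSet_finite _ _) (clusterSet_finite _ _) ?_ ?_
    · rintro S ⟨v, rfl⟩
      exact ⟨v.val, (cluster_image hne hpu hinternal (fun v => e (φ v)) φ1 hcomp v).symm⟩
    · rintro S ⟨v, rfl⟩
      by_cases hv : v = u
      · subst hv
        exact Or.inr rfl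
      · exact Or.inl ⟨⟨v, hv⟩, cluster_image hne hpu hinternal (fun v => e (φ v)) φ1 hcomp ⟨v, hv⟩⟩
  have hrw : dRF (T1.contract u hne) T2 (fun v => e (φ v)) φ2' =
      dRF (T1.contract u hne) T2 φ φ2 := dRF_comp_equiv _ T2 e φ φ2
  calc dRFstar T1 T2 ≤ dRF T1 T2 φ1 φ2' := Nat.sInf_le ⟨φ1, φ2', hb1, hb2, rfl⟩
    _ ≤ dRF (T1.contract u hne) T2 φ φ2 + 1 := by rw [← hrw]; exact key
    _ = dRFstar (T1.contract u hne) T2 + 1 := by rw [hd']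
end
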